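/- For every integer n ≥ 2 with n ≠ 3, there exists a finite connected graph G such that the strong resolving graph G_SR is isomorphic to the path P_n on n vertices. -/

import Mathlib

open SimpleGraph

variable {V : Type*}

/-- `u` is maximally distant from `v` in `G`: every neighbor `w` of `u`
satisfies `d(v,w) ≤ d(v,u)`. -/
def MaxDistant (G : SimpleGraph V) (u v : V) : Prop :=
  ∀ w, G.Adj u w → G.dist v w ≤ G.dist v u

/-- `u` and `v` are mutually maximally distant in `G`. -/
def MMD (G : SimpleGraph V) (u v : V) : Prop :=
  MaxDistant G u v ∧ MaxDistant G v u

/-- The boundary of `G`: vertices maximally distant from some vertex. -/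
def boundary (G : SimpleGraph V) : Set V := {u | ∃ v, MaxDistant G u v}

/-- The strong resolving graph on the whole vertex set (`G_{SR+I}`):
two vertices are adjacent iff they are distinct and mutually maximally distant. -/
def srGraphI (G : SimpleGraph V) : SimpleGraph V where
  Adj u v := u ≠ v ∧ MMD G u v
  symm := ⟨by
    rintro u v ⟨hne, h1, h2⟩
    exact ⟨hne.symm, h2, h1⟩⟩
  loopless := ⟨by
    rintro u ⟨hne, _⟩
    exact hne rfl⟩

/-- The strong resolving graph `G_SR`, with vertex set the boundary of `G`. -/
def srGraph (G : SimpleGraph V) : SimpleGraph (boundary G) :=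
  (srGraphI G).induce (boundary G)

/-- `u` and `v` are true twins: distinct vertices with equal closed neighborhoods. -/
def TrueTwins (G : SimpleGraph V) (u v : V) : Prop :=
  u ≠ v ∧ insert u (G.neighborSet u) = insert v (G.neighborSet v)

/-- `u` and `v` are false twins: distinct vertices with equal open neighborhoods. -/
def FalseTwins (G : SimpleGraph V) (u v : V) : Prop :=
  u ≠ v ∧ G.neighborSet u = G.neighborSet v

/-- A vertex is simplicial if its neighborhood induces a complete graph. -/
def IsSimplicial (G : SimpleGraph V) (v : V) : Prop :=
  ∀ a b, G.Adj v a → G.Adj v b → a ≠ b → G.Adj a b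

/-- `w` strongly resolves `u` and `v`. -/
def StronglyResolves (G : SimpleGraph V) (w u v : V) : Prop :=
  G.dist w u = G.dist w v + G.dist v u ∨ G.dist w v = G.dist w u + G.dist u v

/-- `S` is a strong metric generator for `G`. -/
def IsStrongMetricGenerator (G : SimpleGraph V) (S : Set V) : Prop :=
  ∀ u v : V, u ≠ v → ∃ w ∈ S, StronglyResolves G w u v

/-- The strong metric dimension of `G`. -/
noncomputable def sdim (G : SimpleGraph V) : ℕ :=
  sInf {n | ∃ S : Set V, S.ncard = n ∧ IsStrongMetricGenerator G S}

/-- `S` is a vertex cover of `H`. -/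
def IsVertexCover (H : SimpleGraph V) (S : Set V) : Prop :=
  ∀ u v : V, H.Adj u v → u ∈ S ∨ v ∈ S

/-- The vertex cover number of `H`. -/
noncomputable def vertexCoverNumber (H : SimpleGraph V) : ℕ :=
  sInf {n | ∃ S : Set V, S.ncard = n ∧ _root_.IsVertexCover H S}

/-- The graph `G*`: distinct vertices adjacent iff at distance at least two
or true twins. -/
def GStar (G : SimpleGraph V) : SimpleGraph V where
  Adj u v := u ≠ v ∧ (2 ≤ G.dist u v ∨ TrueTwins G u v)
  symm := ⟨by
    rintro u v ⟨hne, h | h⟩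
    · exact ⟨hne.symm, Or.inl (by rwa [G.dist_comm])⟩
    · exact ⟨hne.symm, Or.inr ⟨h.1.symm, h.2.symm⟩⟩⟩
  loopless := ⟨by
    rintro u ⟨hne, _⟩
    exact hne rfl⟩

/-- The direct (tensor) product of two graphs. -/
def DirectProd {α β : Type*} (G : SimpleGraph α) (H : SimpleGraph β) :
    SimpleGraph (α × β) where
  Adj x y := G.Adj x.1 y.1 ∧ H.Adj x.2 y.2
  symm := ⟨fun _ _ h => ⟨h.1.symm, h.2.symm⟩⟩
  loopless := ⟨fun x h => h.1.ne rfl⟩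

/-- The strong product of two graphs. -/
def StrongProd {α β : Type*} (G : SimpleGraph α) (H : SimpleGraph β) :
    SimpleGraph (α × β) where
  Adj x y := x ≠ y ∧ (x.1 = y.1 ∨ G.Adj x.1 y.1) ∧ (x.2 = y.2 ∨ H.Adj x.2 y.2)
  symm := ⟨by
    rintro x y ⟨hne, h1, h2⟩
    exact ⟨hne.symm, h1.imp Eq.symm Adj.symm, h2.imp Eq.symm Adj.symm⟩⟩
  loopless := ⟨by
    rintro x ⟨hne, _⟩
    exact hne rfl⟩

/-- The Cartesian sum (disjunctive product) of two graphs. -/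
def CartSum {α β : Type*} (G : SimpleGraph α) (H : SimpleGraph β) :
    SimpleGraph (α × β) where
  Adj x y := G.Adj x.1 y.1 ∨ H.Adj x.2 y.2
  symm := ⟨fun _ _ h => h.imp Adj.symm Adj.symm⟩
  loopless := ⟨fun x h => h.elim (fun h => h.ne rfl) (fun h => h.ne rfl)⟩

/-- The lexicographic product of two graphs. -/
def LexProd {α β : Type*} (G : SimpleGraph α) (H : SimpleGraph β) :
    SimpleGraph (α × β) where
  Adj x y := G.Adj x.1 y.1 ∨ (x.1 = y.1 ∧ H.Adj x.2 y.2)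
  symm := ⟨fun _ _ h => h.imp Adj.symm (fun h => ⟨h.1.symm, h.2.symm⟩)⟩
  loopless := ⟨fun x h => h.elim (fun h => h.ne rfl) (fun h => h.2.ne rfl)⟩

/-- The disjoint union of `n` copies of the complete graph on `m` vertices. -/
def CopiesComplete (n m : ℕ) : SimpleGraph (Fin n × Fin m) where
  Adj x y := x.1 = y.1 ∧ x.2 ≠ y.2
  symm := ⟨fun _ _ h => ⟨h.1.symm, h.2.symm⟩⟩
  loopless := ⟨fun x h => h.2 rfl⟩

/-- Every pair of vertices lies on a common cycle of length five. -/
def C5Connected (G : SimpleGraph V) : Prop :=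
  ∀ u v : V, ∃ (w : V) (c : G.Walk w w), c.IsCycle ∧ c.length = 5 ∧
    u ∈ c.support ∧ v ∈ c.support

namespace Stmt9Aux

/-- path adjacency (restricted to vertices below `n`) on the naturals. -/
def padj (n a b : ℕ) : Prop := (a + 1 = b ∨ b + 1 = a) ∧ a < n ∧ b < n

/-- The graph: complement of the path on `{0,…,n-1}` together with a
universal vertex `n`. -/
def GG (n : ℕ) : SimpleGraph (Fin (n+1)) where
  Adj u v := u ≠ v ∧ ¬ padj n u.val v.val
  symm := ⟨by
    rintro u v ⟨h1, h2⟩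
    exact ⟨h1.symm, fun h => h2 ⟨h.1.symm, h.2.2, h.2.1⟩⟩⟩
  loopless := ⟨by rintro u ⟨h, _⟩; exact h rfl⟩

variable {n : ℕ}

lemma adj_last {u : Fin (n+1)} (h : u ≠ Fin.last n) : (GG n).Adj u (Fin.last n) :=
  ⟨h, fun hp => absurd hp.2.2 (by simp)⟩

lemma reach_last (u : Fin (n+1)) : (GG n).Reachable u (Fin.last n) := by
  by_cases hu : u = Fin.last n
  · exact hu ▸ SimpleGraph.Reachable.refl _
  · exact (adj_last hu).reachable

lemma GG_conn : (GG n).Connected := by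
  rw [connected_iff]
  exact ⟨fun u v => (reach_last u).trans (reach_last v).symm, ⟨Fin.last n⟩⟩

lemma dist_le_two (u v : Fin (n+1)) : (GG n).dist u v ≤ 2 := by
  by_cases huv : u = v
  · subst huv; simp [SimpleGraph.dist_self]
  by_cases hu : u = Fin.last n
  · have hv : v ≠ Fin.last n := fun h => huv (hu.trans h.symm)
    have hadj : (GG n).Adj u v := hu ▸ (adj_last hv).symm
    have := SimpleGraph.dist_eq_one_iff_adj.mpr hadj
    omega
  by_cases hv : v = Fin.last n
  · have hadj : (GG n).Adj u v := hv ▸ adj_last hu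
    have := SimpleGraph.dist_eq_one_iff_adj.mpr hadj
    omega
  · have := SimpleGraph.dist_le (SimpleGraph.Walk.cons (adj_last hu)
        (SimpleGraph.Walk.cons (adj_last hv).symm SimpleGraph.Walk.nil))
    simpa using this

lemma dist_eq_two {u v : Fin (n+1)} (hne : u ≠ v) (hadj : ¬(GG n).Adj u v) :
    (GG n).dist u v = 2 := by
  have h1 : (GG n).dist u v ≠ 1 := fun h => hadj (SimpleGraph.dist_eq_one_iff_adj.mp h)
  have h0 : (GG n).dist u v ≠ 0 := fun h => hne (GG_conn.dist_eq_zero_iff.mp h)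
  have := dist_le_two u v
  omega

lemma maxdist_of_nonadj {u v : Fin (n+1)} (hne : u ≠ v) (hadj : ¬(GG n).Adj u v) :
    MaxDistant (GG n) u v := by
  intro w _
  rw [dist_eq_two hne.symm (fun h => hadj h.symm)]
  exact dist_le_two v w

lemma exists_padj (hn : 2 ≤ n) {i : Fin (n+1)} (hi : i.val < n) :
    ∃ w : Fin (n+1), padj n i.val w.val := by
  rcases Nat.eq_zero_or_pos i.val with h | h
  · exact ⟨⟨1, by omega⟩, by simp only [padj, Fin.val_mk]; omega⟩
  · exact ⟨⟨i.val - 1, by omega⟩, by simp only [padj, Fin.val_mk]; omega⟩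

lemma mem_boundary (hn : 2 ≤ n) {i : Fin (n+1)} (hi : i.val < n) :
    i ∈ boundary (GG n) := by
  obtain ⟨w, hw⟩ := exists_padj hn hi
  have hne : i ≠ w := by
    intro h
    rw [← h] at hw
    rcases hw.1 with h' | h' <;> omega
  exact ⟨w, maxdist_of_nonadj hne (fun h => h.2 hw)⟩

lemma last_not_boundary (hn : 2 ≤ n) : Fin.last n ∉ boundary (GG n) := by
  rintro ⟨v, hv⟩
  by_cases hvl : v = Fin.last n
  · subst hvl
    have h0 : (⟨0, by omega⟩ : Fin (n+1)) ≠ Fin.last n := by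
      intro h
      have := congrArg Fin.val h
      simp at this
      omega
    have h1 := hv _ (adj_last h0).symm
    rw [SimpleGraph.dist_self] at h1
    have h2 := GG_conn.dist_eq_zero_iff.mp (Nat.le_zero.mp h1)
    exact h0 h2.symm
  · have hvn : v.val < n := by
      have h1 : v.val ≠ n := fun h => hvl (Fin.ext (by simpa using h))
      have := v.isLt
      omega
    obtain ⟨w, hw⟩ := exists_padj hn hvn
    have hwl : w ≠ Fin.last n := by
      intro h
      have := hw.2.2
      rw [h] at this
      simp at this
    have h1 := hv w (adj_last hwl).symm
    have h2 : (GG n).dist v (Fin.last n) = 1 :=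
      SimpleGraph.dist_eq_one_iff_adj.mpr (adj_last hvl)
    have hvw : v ≠ w := by
      intro h
      rw [← h] at hw
      rcases hw.1 with h' | h' <;> omega
    have h3 : (GG n).dist v w = 2 := dist_eq_two hvw (fun h => h.2 hw)
    omega

lemma arith (hn : 2 ≤ n) (hn3 : n ≠ 3) {i j : ℕ} (hi : i < n) (hj : j < n)
    (hij : i < j) (hne : ¬(i + 1 = j ∨ j + 1 = i)) :
    ∃ w, w < n ∧ (((i + 1 = w ∨ w + 1 = i) ∧ ¬(j + 1 = w ∨ w + 1 = j)) ∨
             ((j + 1 = w ∨ w + 1 = j) ∧ ¬(i + 1 = w ∨ w + 1 = i))) := by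
  by_cases h1 : j + 1 < n
  · exact ⟨j+1, h1, Or.inr (by omega)⟩
  by_cases h2 : 1 ≤ i
  · exact ⟨i-1, by omega, Or.inl (by omega)⟩
  · exact ⟨1, by omega, Or.inl (by omega)⟩

lemma break_max {i j w : Fin (n+1)} (hi : i.val < n) (hj : j.val < n)
    (hw : w.val < n) (hne : i ≠ j) (hp : ¬ padj n i.val j.val)
    (h1 : j.val + 1 = w.val ∨ w.val + 1 = j.val)
    (h2 : ¬(i.val + 1 = w.val ∨ w.val + 1 = i.val)) :
    ¬ MaxDistant (GG n) i j := by
  intro hmax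
  have hiw : i ≠ w := by
    intro h
    rw [← h] at h1
    exact hp ⟨h1.symm, hi, hj⟩
  have hjw : j ≠ w := by
    intro h
    rw [h] at h1
    omega
  have hAiw : (GG n).Adj i w := ⟨hiw, fun h => h2 h.1⟩
  have hAjw : ¬ (GG n).Adj j w := fun h => h.2 ⟨h1, hj, hw⟩
  have hd2 : (GG n).dist j w = 2 := dist_eq_two hjw hAjw
  have hd1 : (GG n).dist j i = 1 :=
    SimpleGraph.dist_eq_one_iff_adj.mpr ⟨hne.symm, fun h => hp ⟨h.1.symm, hi, hj⟩⟩
  have := hmax w hAiw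
  omega

lemma not_mmd (hn : 2 ≤ n) (hn3 : n ≠ 3) {i j : Fin (n+1)} (hi : i.val < n)
    (hj : j.val < n) (hne : i ≠ j) (hp : ¬ padj n i.val j.val) :
    ¬ MMD (GG n) i j := by
  intro hmmd
  have hvne : i.val ≠ j.val := fun h => hne (Fin.ext h)
  have hp' : ¬(i.val + 1 = j.val ∨ j.val + 1 = i.val) := fun h => hp ⟨h, hi, hj⟩
  have hpj : ¬ padj n j.val i.val := fun h => hp ⟨h.1.symm, hi, hj⟩
  obtain ⟨w, hwn, hc⟩ :
      ∃ w, w < n ∧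
        (((i.val + 1 = w ∨ w + 1 = i.val) ∧ ¬(j.val + 1 = w ∨ w + 1 = j.val)) ∨
         ((j.val + 1 = w ∨ w + 1 = j.val) ∧ ¬(i.val + 1 = w ∨ w + 1 = i.val))) := by
    rcases hvne.lt_or_gt with h | h
    · exact arith hn hn3 hi hj h hp'
    · obtain ⟨w, hw, hc⟩ := arith hn hn3 hj hi h (by omega)
      exact ⟨w, hw, hc.symm⟩
  have hwn' : (⟨w, by omega⟩ : Fin (n+1)).val < n := hwn
  rcases hc with ⟨h1, h2⟩ | ⟨h1, h2⟩
  · exact break_max (w := ⟨w, by omega⟩) hj hi hwn' hne.symm hpj h1 h2 hmmd.2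
  · exact break_max (w := ⟨w, by omega⟩) hi hj hwn' hne hp h1 h2 hmmd.1

lemma mmd_of_padj {i j : Fin (n+1)} (hp : padj n i.val j.val) : MMD (GG n) i j := by
  have hne : i ≠ j := by
    intro h
    rw [← h] at hp
    rcases hp.1 with h' | h' <;> omega
  have hpj : padj n j.val i.val := ⟨hp.1.symm, hp.2.2, hp.2.1⟩
  exact ⟨maxdist_of_nonadj hne (fun h => h.2 hp),
    maxdist_of_nonadj hne.symm (fun h => h.2 hpj)⟩

end Stmt9Aux

open Stmt9Aux in
theorem stmt9 (n : ℕ) (hn : 2 ≤ n) (hn3 : n ≠ 3) :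
    ∃ (m : ℕ) (G : SimpleGraph (Fin m)), G.Connected ∧
      Nonempty (srGraph G ≃g pathGraph n) := by
  refine ⟨n+1, GG n, GG_conn, ⟨?_⟩⟩
  have hb : ∀ x : boundary (GG n), (x : Fin (n+1)).val < n := by
    intro x
    by_contra h
    have hx' : (x : Fin (n+1)) = Fin.last n :=
      Fin.ext (by have := (x : Fin (n+1)).isLt; simp only [Fin.val_last]; omega)
    exact last_not_boundary hn (hx' ▸ x.property)
  refine ⟨Equiv.mk
      (fun x => (⟨(x : Fin (n+1)).val, hb x⟩ : Fin n))
      (fun j => ⟨⟨j.val, by omega⟩, mem_boundary hn (by simpa using j.isLt)⟩)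
      (fun x => Subtype.ext (Fin.ext rfl)) (fun j => Fin.ext rfl), ?_⟩
  intro a b
  rw [pathGraph_adj]
  simp only [Equiv.coe_fn_mk, Fin.val_mk]
  show _ ↔ ((a : Fin (n+1)) ≠ (b : Fin (n+1)) ∧ MMD (GG n) _ _)
  constructor
  · intro h
    have hp : padj n ((a : Fin (n+1))).val ((b : Fin (n+1))).val := ⟨h, hb a, hb b⟩
    refine ⟨fun he => ?_, mmd_of_padj hp⟩
    have := congrArg Fin.val he
    omega
  · rintro ⟨hne, hmmd⟩
    by_contra h
    exact not_mmd hn hn3 (hb a) (hb b) hne (fun hp => h hp.1) hmmd
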